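/- For every ε > 0 there exists an integer n₀ such that the following holds. Let G be a digraph on n ≥ n₀ vertices, let S ⊆ V(G), let m be a positive integer with m ≤ |S|, and set K = m/|S|. Then there exists a subset T ⊆ S with |T| = m such that for every vertex v of G: |d⁺(v,T) − K·d⁺(v,S)| ≤ εn, |d⁻(v,T) − K·d⁻(v,S)| ≤ εn, |d⁺(v,S∖T) − (1−K)·d⁺(v,S)| ≤ εn and |d⁻(v,S∖T) − (1−K)·d⁻(v,S)| ≤ εn. -/

import Mathlib

open Set

section Defs

variable {V : Type*}

/-- Out-degree of `v` in the digraph `G`. -/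
noncomputable def outdeg (G : V → V → Prop) (v : V) : ℕ := {u | G v u}.ncard

/-- In-degree of `v` in the digraph `G`. -/
noncomputable def indeg (G : V → V → Prop) (v : V) : ℕ := {u | G u v}.ncard

/-- Number of out-neighbours of `v` inside the set `X`. -/
noncomputable def outdegOn (G : V → V → Prop) (v : V) (X : Set V) : ℕ := {u ∈ X | G v u}.ncard

/-- Number of in-neighbours of `v` inside the set `X`. -/
noncomputable def indegOn (G : V → V → Prop) (v : V) (X : Set V) : ℕ := {u ∈ X | G u v}.ncard

/-- Number of arcs with tail in `X` and head in `Y`. -/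
noncomputable def arcsBetween (G : V → V → Prop) (X Y : Set V) : ℕ :=
  {p : V × V | p.1 ∈ X ∧ p.2 ∈ Y ∧ G p.1 p.2}.ncard

/-- `G` is an oriented graph: for distinct `x, y` at most one of the arcs `xy`, `yx`
is present (this also rules out loops). -/
def IsOrientedGraph (G : V → V → Prop) : Prop := ∀ x y, G x y → ¬ G y x

/-- `σ₊₋(G) ≥ r`: for every ordered pair of distinct vertices `x, y` with `xy` not an arc,
`d⁺(x) + d⁻(y) ≥ r`. -/
def SigmaGE (G : V → V → Prop) (r : ℝ) : Prop :=
  ∀ x y : V, x ≠ y → ¬ G x y → r ≤ (outdeg G x : ℝ) + (indeg G y : ℝ)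

/-- An antidirected Hamilton cycle in a digraph `G` on `n` vertices: a cyclic ordering
of all vertices such that between consecutive vertices exactly one arc is present
and the directions of these arcs alternate around the cycle. -/
def HasAntidirectedHamCycle (n : ℕ) (G : V → V → Prop) : Prop :=
  ∃ f : ZMod n ≃ V, ∀ i : ZMod n,
    Xor' (G (f i) (f (i + 1))) (G (f (i + 1)) (f i)) ∧
    (G (f i) (f (i + 1)) ↔ G (f (i + 2)) (f (i + 1)))

/-- A directed Hamilton cycle in a digraph `G` on `n` vertices. -/
def HasDirectedHamCycle (n : ℕ) (G : V → V → Prop) : Prop :=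
  ∃ f : ZMod n ≃ V, ∀ i : ZMod n, G (f i) (f (i + 1))

/-- `G` contains every orientation of a Hamilton cycle: for every assignment of a
direction to each edge of the `n`-cycle there is a cyclic ordering of all vertices
realizing it. -/
def ContainsEveryOrientationHamCycle (n : ℕ) (G : V → V → Prop) : Prop :=
  ∀ σ : ZMod n → Bool, ∃ f : ZMod n ≃ V, ∀ i : ZMod n,
    if σ i = true then G (f i) (f (i + 1)) else G (f (i + 1)) (f i)

/-- `G` (a digraph on `n` vertices) is a robust `(ν,τ)`-outexpander. -/
def RobustOutexpander (n : ℕ) (G : V → V → Prop) (ν τ : ℝ) : Prop :=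
  ∀ S : Set V, τ * n < (S.ncard : ℝ) → (S.ncard : ℝ) < (1 - τ) * n →
    (S.ncard : ℝ) + ν * n ≤ (({v : V | ν * n ≤ (indegOn G v S : ℝ)}).ncard : ℝ)

/-- An `(ε,K)`-nice partition `(A,B,C,D)` of an oriented graph `G` on `n` vertices. -/
def NicePartition (n : ℕ) (G : V → V → Prop) (ε K : ℝ) (A B C D : Set V) : Prop :=
  A ∪ B ∪ C ∪ D = Set.univ ∧
  Disjoint A B ∧ Disjoint A C ∧ Disjoint A D ∧
  Disjoint B C ∧ Disjoint B D ∧ Disjoint C D ∧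
  A.ncard ≤ C.ncard ∧
  |((A.ncard : ℝ) + (C.ncard : ℝ)) - n / 2| ≤ K * ε * n ∧
  |(B.ncard : ℝ) - n / 4| ≤ K * ε * n ∧
  |(D.ncard : ℝ) - n / 4| ≤ K * ε * n ∧
  (arcsBetween G (A ∪ D) (C ∪ D) : ℝ) ≤ ε ^ 2 * n ^ 2

/-- `v` is a `δ`-good vertex for the partition `(A,B,C,D)`. -/
def GoodVertex (n : ℕ) (G : V → V → Prop) (δ : ℝ) (A B C D : Set V) (v : V) : Prop :=
  (v ∈ A → (A.ncard : ℝ) / 2 - δ * n ≤ (outdegOn G v A : ℝ) ∧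
           (A.ncard : ℝ) / 2 - δ * n ≤ (indegOn G v A : ℝ) ∧
           (B.ncard : ℝ) - δ * n ≤ (outdegOn G v B : ℝ) ∧
           (D.ncard : ℝ) - δ * n ≤ (indegOn G v D : ℝ)) ∧
  (v ∈ B → (C.ncard : ℝ) - δ * n ≤ (outdegOn G v C : ℝ) ∧
           (A.ncard : ℝ) - δ * n ≤ (indegOn G v A : ℝ)) ∧
  (v ∈ C → (C.ncard : ℝ) / 2 - δ * n ≤ (outdegOn G v C : ℝ) ∧
           (C.ncard : ℝ) / 2 - δ * n ≤ (indegOn G v C : ℝ) ∧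
           (D.ncard : ℝ) - δ * n ≤ (outdegOn G v D : ℝ) ∧
           (B.ncard : ℝ) - δ * n ≤ (indegOn G v B : ℝ)) ∧
  (v ∈ D → (C.ncard : ℝ) / 2 - δ * n ≤ (outdegOn G v B : ℝ) ∧
           (A.ncard : ℝ) / 2 - δ * n ≤ (indegOn G v B : ℝ) ∧
           (A.ncard : ℝ) - δ * n ≤ (outdegOn G v A : ℝ) ∧
           (C.ncard : ℝ) - δ * n ≤ (indegOn G v C : ℝ))

/-- A special arc for the partition `(A,B,C,D)`: tail in `A ∪ D` and head in `C ∪ D`,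
or tail in `B ∪ C` and head in `A ∪ B`. -/
def SpecialArc (G : V → V → Prop) (A B C D : Set V) (u v : V) : Prop :=
  G u v ∧ ((u ∈ A ∪ D ∧ v ∈ C ∪ D) ∨ (u ∈ B ∪ C ∧ v ∈ A ∪ B))

/-- `p 0, p 1, …, p (d-1)` is an antidirected path in `G`: the vertices are distinct,
between consecutive vertices exactly one arc is present, and consecutive arcs
alternate in direction. -/
def IsAntidirectedPathOn (G : V → V → Prop) (d : ℕ) (p : ℕ → V) : Prop :=
  (∀ i j, i < d → j < d → p i = p j → i = j) ∧
  (∀ i, i + 1 < d → Xor' (G (p i) (p (i + 1))) (G (p (i + 1)) (p i))) ∧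
  (∀ i, i + 2 < d → (G (p i) (p (i + 1)) ↔ G (p (i + 2)) (p (i + 1))))

/-- A `D`-proper path for the partition `(A,B,C,D)` and parameter `δ`: an antidirected
path of order at most 10 whose first and last arcs point away from / towards the
interior as prescribed (`v₁v₂` and `v_{d-1}v_d` are arcs) and whose end-vertices are
`δ`-good vertices of `D`. -/
def IsDProperPath (n : ℕ) (G : V → V → Prop) (δ : ℝ) (A B C D : Set V)
    (d : ℕ) (p : ℕ → V) : Prop :=
  IsAntidirectedPathOn G d p ∧ 2 ≤ d ∧ d ≤ 10 ∧
  G (p 0) (p 1) ∧ G (p (d - 2)) (p (d - 1)) ∧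
  p 0 ∈ D ∧ p (d - 1) ∈ D ∧
  GoodVertex n G δ A B C D (p 0) ∧ GoodVertex n G δ A B C D (p (d - 1))

end Defs


section Aux


lemma monoBound (s d m : ℝ) (hs1 : 1 ≤ s) (hd0 : 0 ≤ d) (hds : d ≤ s)
    (hm0 : 0 ≤ m) (hms : m ≤ s) (a b c : ℕ) (h : a + b + c ≤ 9) :
    s^a * d^b * m^c ≤ s^9 := by
  have hs0 : (0:ℝ) ≤ s := le_trans zero_le_one hs1
  calc s^a * d^b * m^c ≤ s^a * s^b * s^c := by
        apply mul_le_mul (mul_le_mul le_rfl (pow_le_pow_left₀ hd0 hds b)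
          (pow_nonneg hd0 b) (pow_nonneg hs0 a)) (pow_le_pow_left₀ hm0 hms c)
          (pow_nonneg hm0 c) (mul_nonneg (pow_nonneg hs0 a) (pow_nonneg hs0 b))
    _ = s^(a+b+c) := by rw [pow_add, pow_add]
    _ ≤ s^9 := pow_le_pow_right₀ hs1 h

set_option maxHeartbeats 1000000 in
lemma polyLemma (s d m : ℝ) (hs : 1000 ≤ s) (hd0 : 0 ≤ d) (hds : d ≤ s)
    (hm0 : 0 ≤ m) (hms : m ≤ s) :
    18*s^1*d^4*m^4 - 36*s^2*d^3*m^4 - 36*s^2*d^4*m^3 + 3*s^2*d^4*m^4 + 24*s^3*d^2*m^4 + 72*s^3*d^3*m^3 - 6*s^3*d^3*m^4 + 24*s^3*d^4*m^2 - 6*s^3*d^4*m^3 - 6*s^4*d^1*m^4 + 1*s^4*d^2*m^2 - 48*s^4*d^2*m^3 + 3*s^4*d^2*m^4 - 48*s^4*d^3*m^2 + 12*s^4*d^3*m^3 - 6*s^4*d^4*m^1 + 3*s^4*d^4*m^2 - 1*s^5*d^1*m^2 + 12*s^5*d^1*m^3 - 1*s^5*d^2*m^1 + 31*s^5*d^2*m^2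 - 6*s^5*d^2*m^3 + 12*s^5*d^3*m^1 - 6*s^5*d^3*m^2 + 1*s^6*d^1*m^1 - 7*s^6*d^1*m^2 - 7*s^6*d^2*m^1 + 3*s^6*d^2*m^2 + 1*s^7*d^1*m^1
      ≤ s^2 * (s^4 * (s * (s-1) * (s-2) * (s-3))) := by
  have hs1 : (1:ℝ) ≤ s := by linarith
  have hs0 : (0:ℝ) ≤ s := by linarith
  have hub1 : s^1*d^4*m^4 ≤ s^9 := monoBound s d m hs1 hd0 hds hm0 hms 1 4 4 (by norm_num)
  have hub2 : s^3*d^2*m^4 ≤ s^9 := monoBound s d m hs1 hd0 hds hm0 hms 3 2 4 (by norm_num)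
  have hub3 : s^3*d^3*m^3 ≤ s^9 := monoBound s d m hs1 hd0 hds hm0 hms 3 3 3 (by norm_num)
  have hub4 : s^3*d^4*m^2 ≤ s^9 := monoBound s d m hs1 hd0 hds hm0 hms 3 4 2 (by norm_num)
  have hub5 : s^4*d^2*m^2 ≤ s^9 := monoBound s d m hs1 hd0 hds hm0 hms 4 2 2 (by norm_num)
  have hub6 : s^5*d^1*m^3 ≤ s^9 := monoBound s d m hs1 hd0 hds hm0 hms 5 1 3 (by norm_num)
  have hub7 : s^5*d^2*m^2 ≤ s^9 := monoBound s d m hs1 hd0 hds hm0 hms 5 2 2 (by norm_num)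
  have hub8 : s^5*d^3*m^1 ≤ s^9 := monoBound s d m hs1 hd0 hds hm0 hms 5 3 1 (by norm_num)
  have hub9 : s^6*d^1*m^1 ≤ s^9 := monoBound s d m hs1 hd0 hds hm0 hms 6 1 1 (by norm_num)
  have hub10 : s^7*d^1*m^1 ≤ s^9 := monoBound s d m hs1 hd0 hds hm0 hms 7 1 1 (by norm_num)
  have hnn1 : (0:ℝ) ≤ s^2*d^3*m^4 := by positivity
  have hnn2 : (0:ℝ) ≤ s^2*d^4*m^3 := by positivity
  have hnn3 : (0:ℝ) ≤ s^4*d^1*m^4 := by positivity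
  have hnn4 : (0:ℝ) ≤ s^4*d^2*m^3 := by positivity
  have hnn5 : (0:ℝ) ≤ s^4*d^3*m^2 := by positivity
  have hnn6 : (0:ℝ) ≤ s^4*d^4*m^1 := by positivity
  have hnn7 : (0:ℝ) ≤ s^5*d^1*m^2 := by positivity
  have hnn8 : (0:ℝ) ≤ s^5*d^2*m^1 := by positivity
  have hnn9 : (0:ℝ) ≤ s^6*d^1*m^2 := by positivity
  have hnn10 : (0:ℝ) ≤ s^6*d^2*m^1 := by positivity
  -- leading term bound
  have hd4 : d*(s-d) ≤ s^2/4 := by nlinarith [sq_nonneg (s - 2*d)]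
  have hm4 : m*(s-m) ≤ s^2/4 := by nlinarith [sq_nonneg (s - 2*m)]
  have hd40 : 0 ≤ d*(s-d) := mul_nonneg hd0 (by linarith)
  have hm40 : 0 ≤ m*(s-m) := mul_nonneg hm0 (by linarith)
  have hX : d*m*(s-d)*(s-m) ≤ s^4/16 := by
    calc d*m*(s-d)*(s-m) = (d*(s-d))*(m*(s-m)) := by ring
      _ ≤ (s^2/4)*(s^2/4) := mul_le_mul hd4 hm4 hm40 (by positivity)
      _ = s^4/16 := by ring
  have hX0 : 0 ≤ d*m*(s-d)*(s-m) := by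
    calc (0:ℝ) ≤ (d*(s-d))*(m*(s-m)) := mul_nonneg hd40 hm40
      _ = d*m*(s-d)*(s-m) := by ring
  have hX2 : (d*m*(s-d)*(s-m))^2 ≤ (s^4/16)^2 := pow_le_pow_left₀ hX0 hX 2
  have hlead : 3*s^2*(d*m*(s-d)*(s-m))^2 ≤ 3/256 * s^10 := by
    have h1 := mul_le_mul_of_nonneg_left hX2 (show (0:ℝ) ≤ 3*s^2 by positivity)
    have h2 : 3*s^2*((s^4/16)^2) = 3/256*s^10 := by ring
    linarith
  -- final single-variable comparison
  have hfin : 3/256*s^10 + 196*s^9 ≤ s^2 * (s^4 * (s * (s-1) * (s-2) * (s-3))) := by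
    have h7 : (0:ℝ) ≤ s^7 := by positivity
    have key : 3/256*s^3 + 196*s^2 ≤ (s-1)*(s-2)*(s-3) := by
      nlinarith [mul_le_mul_of_nonneg_left hs (pow_nonneg hs0 3),
        mul_le_mul_of_nonneg_left hs (pow_nonneg hs0 2),
        mul_le_mul_of_nonneg_left hs hs0]
    have h1 := mul_le_mul_of_nonneg_left key h7
    have h2 : s^7*(3/256*s^3 + 196*s^2) = 3/256*s^10 + 196*s^9 := by ring
    have h3 : s^7*((s-1)*(s-2)*(s-3)) = s^2 * (s^4 * (s * (s-1) * (s-2) * (s-3))) := by ring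
    linarith
  have hid : 18*s^1*d^4*m^4 - 36*s^2*d^3*m^4 - 36*s^2*d^4*m^3 + 3*s^2*d^4*m^4 + 24*s^3*d^2*m^4 + 72*s^3*d^3*m^3 - 6*s^3*d^3*m^4 + 24*s^3*d^4*m^2 - 6*s^3*d^4*m^3 - 6*s^4*d^1*m^4 + 1*s^4*d^2*m^2 - 48*s^4*d^2*m^3 + 3*s^4*d^2*m^4 - 48*s^4*d^3*m^2 + 12*s^4*d^3*m^3 - 6*s^4*d^4*m^1 + 3*s^4*d^4*m^2 - 1*s^5*d^1*m^2 + 12*s^5*d^1*m^3 - 1*s^5*d^2*m^1 + 31*s^5*d^2*m^2 - 6*s^5*d^2*m^3 + 12*s^5*d^3*m^1 - 6*s^5*d^3*m^2 + 1*s^6*d^1*m^1 - 7*s^6*d^1*m^2 - 7*s^6*d^2*m^1 + 3*s^6*d^2*m^2 + 1*s^7*d^1*m^1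
      = 3*s^2*(d*m*(s-d)*(s-m))^2 + (18*s^1*d^4*m^4 - 36*s^2*d^3*m^4 - 36*s^2*d^4*m^3 + 24*s^3*d^2*m^4 + 72*s^3*d^3*m^3 + 24*s^3*d^4*m^2 - 6*s^4*d^1*m^4 + 1*s^4*d^2*m^2 - 48*s^4*d^2*m^3 - 48*s^4*d^3*m^2 - 6*s^4*d^4*m^1 - 1*s^5*d^1*m^2 + 12*s^5*d^1*m^3 - 1*s^5*d^2*m^1 + 31*s^5*d^2*m^2 + 12*s^5*d^3*m^1 + 1*s^6*d^1*m^1 - 7*s^6*d^1*m^2 - 7*s^6*d^2*m^1 + 1*s^7*d^1*m^1) := by ring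
  rw [hid]
  linarith



lemma c2id (x : ℕ) : ((x:ℝ))^2 = 2*(x.choose 2 : ℝ) + x := by
  induction x with
  | zero => simp
  | succ y ih =>
    rw [Nat.choose_succ_succ y 1, Nat.choose_one_right]
    push_cast
    push_cast at ih
    linear_combination ih

lemma c3id (x : ℕ) : ((x:ℝ))^3 = 6*(x.choose 3 : ℝ) + 6*(x.choose 2 : ℝ) + x := by
  induction x with
  | zero => simp
  | succ y ih =>
    rw [Nat.choose_succ_succ y 2, Nat.choose_succ_succ y 1, Nat.choose_one_right]
    push_cast
    push_cast at ih
    linear_combination ih + 3*(c2id y)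

lemma c4id (x : ℕ) : ((x:ℝ))^4 = 24*(x.choose 4 : ℝ) + 36*(x.choose 3 : ℝ)
    + 14*(x.choose 2 : ℝ) + x := by
  induction x with
  | zero => simp
  | succ y ih =>
    rw [Nat.choose_succ_succ y 3, Nat.choose_succ_succ y 2, Nat.choose_succ_succ y 1,
      Nat.choose_one_right]
    push_cast
    push_cast at ih
    linear_combination ih + 4*(c3id y) + 6*(c2id y)

lemma f2id (x : ℕ) : 2*(x.choose 2 : ℝ) = x*(x-1) := by
  have := c2id x; linarith

lemma f3id (x : ℕ) : 6*(x.choose 3 : ℝ) = x*((x:ℝ)-1)*((x:ℝ)-2) := by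
  induction x with
  | zero => simp
  | succ y ih =>
    rw [Nat.choose_succ_succ y 2]
    push_cast
    push_cast at ih
    linear_combination ih + 3*(f2id y)

lemma f4id (x : ℕ) : 24*(x.choose 4 : ℝ) = x*((x:ℝ)-1)*((x:ℝ)-2)*((x:ℝ)-3) := by
  induction x with
  | zero => simp
  | succ y ih =>
    rw [Nat.choose_succ_succ y 3]
    push_cast
    push_cast at ih
    linear_combination ih + 4*(f3id y)

lemma pxid (x : ℕ) (μ : ℝ) : (((x:ℝ)) - μ)^4
    = 24*(x.choose 4 : ℝ) + (36-24*μ)*(x.choose 3 : ℝ)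
      + (14-24*μ+12*μ^2)*(x.choose 2 : ℝ) + (1-4*μ+6*μ^2-4*μ^3)*(x:ℝ) + μ^4 := by
  linear_combination (c4id x) - 4*μ*(c3id x) + 6*μ^2*(c2id x)

lemma chooseRel (a b : ℕ) (ha : 1 ≤ a) (hb : 1 ≤ b) :
    a * ((a-1).choose (b-1)) = b * (a.choose b) := by
  obtain ⟨a', rfl⟩ : ∃ a', a = a'+1 := ⟨a-1, by omega⟩
  obtain ⟨b', rfl⟩ : ∃ b', b = b'+1 := ⟨b-1, by omega⟩
  simpa using (Nat.add_one_mul_choose_eq a' b').trans (mul_comm _ _)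


set_option maxHeartbeats 1000000 in
lemma ratIneq (s d m B N1 N2 N3 N4 C2 C3 C4 μ : ℝ)
    (hs : 1000 ≤ s) (hd0 : 0 ≤ d) (hds : d ≤ s) (hm0 : 0 ≤ m) (hms : m ≤ s)
    (hB : 0 < B)
    (hN1 : s*N1 = m*B) (hN2 : (s-1)*N2 = (m-1)*N1) (hN3 : (s-2)*N3 = (m-2)*N2)
    (hN4 : (s-3)*N4 = (m-3)*N3)
    (hC2 : 2*C2 = d*(d-1)) (hC3 : 6*C3 = d*(d-1)*(d-2)) (hC4 : 24*C4 = d*(d-1)*(d-2)*(d-3))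
    (hmu : s*μ = d*m) :
    24*C4*N4 + (36-24*μ)*(C3*N3) + (14-24*μ+12*μ^2)*(C2*N2)
      + (1-4*μ+6*μ^2-4*μ^3)*(d*N1) + μ^4*B ≤ s^2*B := by
  have hs0 : (0:ℝ) < s := by linarith
  have hs1 : (0:ℝ) < s-1 := by linarith
  have hs2 : (0:ℝ) < s-2 := by linarith
  have hs3 : (0:ℝ) < s-3 := by linarith
  have e1 : N1 = m*B/s := by rw [eq_div_iff hs0.ne']; linarith
  have e2 : N2 = (m-1)*N1/(s-1) := by rw [eq_div_iff hs1.ne']; linarith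
  have e3 : N3 = (m-2)*N2/(s-2) := by rw [eq_div_iff hs2.ne']; linarith
  have e4 : N4 = (m-3)*N3/(s-3) := by rw [eq_div_iff hs3.ne']; linarith
  have emu : μ = d*m/s := by rw [eq_div_iff hs0.ne']; linarith
  have eC2 : C2 = d*(d-1)/2 := by linarith
  have eC3 : C3 = d*(d-1)*(d-2)/6 := by linarith
  have eC4 : C4 = d*(d-1)*(d-2)*(d-3)/24 := by linarith
  have hE : 24*C4*N4 + (36-24*μ)*(C3*N3) + (14-24*μ+12*μ^2)*(C2*N2)
      + (1-4*μ+6*μ^2-4*μ^3)*(d*N1) + μ^4*B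
      = B * (18*s^1*d^4*m^4 - 36*s^2*d^3*m^4 - 36*s^2*d^4*m^3 + 3*s^2*d^4*m^4 + 24*s^3*d^2*m^4 + 72*s^3*d^3*m^3 - 6*s^3*d^3*m^4 + 24*s^3*d^4*m^2 - 6*s^3*d^4*m^3 - 6*s^4*d^1*m^4 + 1*s^4*d^2*m^2 - 48*s^4*d^2*m^3 + 3*s^4*d^2*m^4 - 48*s^4*d^3*m^2 + 12*s^4*d^3*m^3 - 6*s^4*d^4*m^1 + 3*s^4*d^4*m^2 - 1*s^5*d^1*m^2 + 12*s^5*d^1*m^3 - 1*s^5*d^2*m^1 + 31*s^5*d^2*m^2 - 6*s^5*d^2*m^3 + 12*s^5*d^3*m^1 - 6*s^5*d^3*m^2 + 1*s^6*d^1*m^1 - 7*s^6*d^1*m^2 - 7*s^6*d^2*m^1 + 3*s^6*d^2*m^2 + 1*s^7*d^1*m^1)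
        / (s^4*(s*(s-1)*(s-2)*(s-3))) := by
    rw [e4, e3, e2, e1, emu, eC2, eC3, eC4]
    field_simp
    ring
  rw [hE]
  have hden : (0:ℝ) < s^4*(s*(s-1)*(s-2)*(s-3)) :=
    mul_pos (pow_pos hs0 4) (mul_pos (mul_pos (mul_pos hs0 hs1) hs2) hs3)
  rw [div_le_iff₀ hden]
  have hP := polyLemma s d m hs hd0 hds hm0 hms
  have := mul_le_mul_of_nonneg_left hP hB.le
  nlinarith [this]


lemma devTrivial (mr sr dr xr : ℝ) (hs0 : 0 < sr) (hx : 0 ≤ xr) (hxm : xr ≤ mr)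
    (hd0 : 0 ≤ dr) (hds : dr ≤ sr) (hm0 : 0 ≤ mr) : |xr - mr/sr*dr| ≤ mr := by
  have h1 : 0 ≤ mr/sr*dr := by positivity
  have h2 : mr/sr*dr ≤ mr := by
    have h3 : mr/sr*dr ≤ mr/sr*sr := mul_le_mul_of_nonneg_left hds (by positivity)
    rwa [div_mul_cancel₀ mr hs0.ne'] at h3
  rw [abs_le]
  constructor <;> linarith



section CountAux
variable {V : Type} [DecidableEq V]






lemma countSupersets (S R : Finset V) (m : ℕ) (hRS : R ⊆ S) (hRm : R.card ≤ m) :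
    ((S.powersetCard m).filter (fun T => R ⊆ T)).card
      = (S.card - R.card).choose (m - R.card) := by
  rw [← Finset.card_sdiff_of_subset hRS, ← Finset.card_powersetCard]
  apply Finset.card_bij' (fun T _ => T \ R) (fun T' _ => T' ∪ R)
  · intro T hT
    simp only [Finset.mem_filter, Finset.mem_powersetCard] at hT
    obtain ⟨⟨hTS, hTm⟩, hRT⟩ := hT
    rw [Finset.mem_powersetCard]
    exact ⟨Finset.sdiff_subset_sdiff hTS le_rfl, by rw [Finset.card_sdiff_of_subset hRT, hTm]⟩
  · intro T' hT'
    rw [Finset.mem_powersetCard] at hT'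
    obtain ⟨hT'S, hT'c⟩ := hT'
    have hdisj : Disjoint T' R := Finset.disjoint_of_subset_left hT'S Finset.sdiff_disjoint
    simp only [Finset.mem_filter, Finset.mem_powersetCard]
    refine ⟨⟨Finset.union_subset (hT'S.trans (Finset.sdiff_subset)) hRS, ?_⟩,
      Finset.subset_union_right⟩
    rw [Finset.card_union_of_disjoint hdisj, hT'c]
    omega
  · intro T hT
    simp only [Finset.mem_filter] at hT
    exact Finset.sdiff_union_of_subset hT.2
  · intro T' hT'
    rw [Finset.mem_powersetCard] at hT'
    have hdisj : Disjoint T' R := Finset.disjoint_of_subset_left hT'.1 Finset.sdiff_disjoint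
    exact Finset.union_sdiff_cancel_right hdisj

lemma chooseSum (S D : Finset V) (m r : ℕ) (hDS : D ⊆ S) (hrm : r ≤ m) :
    ∑ T ∈ S.powersetCard m, ((T ∩ D).card.choose r)
      = D.card.choose r * (S.card - r).choose (m - r) := by
  have step : ∀ T ∈ S.powersetCard m,
      (T ∩ D).card.choose r = ((D.powersetCard r).filter (fun R => R ⊆ T)).card := by
    intro T _
    rw [← Finset.card_powersetCard]
    congr 1
    ext R
    simp only [Finset.mem_powersetCard, Finset.mem_filter, Finset.subset_inter_iff]
    tauto
  rw [Finset.sum_congr rfl step]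
  simp only [Finset.card_filter]
  rw [Finset.sum_comm]
  have inner : ∀ R ∈ D.powersetCard r,
      (∑ T ∈ S.powersetCard m, if R ⊆ T then 1 else 0)
        = (S.card - r).choose (m - r) := by
    intro R hR
    rw [Finset.mem_powersetCard] at hR
    rw [← Finset.card_filter]
    rw [countSupersets S R m (hR.1.trans hDS) (hR.2 ▸ hrm), hR.2]
  rw [Finset.sum_congr rfl inner, Finset.sum_const, Finset.card_powersetCard, smul_eq_mul]


lemma momentBound (S D : Finset V) (m : ℕ) (hDS : D ⊆ S) (hm : m ≤ S.card)
    (hm4 : 4 ≤ m) (hs : 1000 ≤ S.card) :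
    ∑ T ∈ S.powersetCard m, (((T ∩ D).card : ℝ) - ((m:ℝ) / S.card) * D.card)^4
      ≤ (S.card:ℝ)^2 * (S.card.choose m) := by
  classical
  set s : ℕ := S.card with hsdef
  set d : ℕ := D.card with hddef
  set μ : ℝ := ((m:ℝ)/s) * d with hmudef
  have hsum : ∑ T ∈ S.powersetCard m, (((T ∩ D).card : ℝ) - μ)^4
      = 24*((d.choose 4 * (s-4).choose (m-4) : ℕ) : ℝ)
        + (36-24*μ)*((d.choose 3 * (s-3).choose (m-3) : ℕ) : ℝ)
        + (14-24*μ+12*μ^2)*((d.choose 2 * (s-2).choose (m-2) : ℕ) : ℝ)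
        + (1-4*μ+6*μ^2-4*μ^3)*((d.choose 1 * (s-1).choose (m-1) : ℕ) : ℝ)
        + μ^4 * (s.choose m : ℕ) := by
    rw [← chooseSum S D m 4 hDS (by omega), ← chooseSum S D m 3 hDS (by omega),
      ← chooseSum S D m 2 hDS (by omega), ← chooseSum S D m 1 hDS (by omega)]
    push_cast
    rw [Finset.mul_sum, Finset.mul_sum, Finset.mul_sum, Finset.mul_sum,
      ← Finset.sum_add_distrib, ← Finset.sum_add_distrib, ← Finset.sum_add_distrib]
    rw [show (μ^4 * (s.choose m : ℝ)) = ∑ _T ∈ S.powersetCard m, μ^4 by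
      rw [Finset.sum_const, Finset.card_powersetCard, nsmul_eq_mul, mul_comm]]
    rw [← Finset.sum_add_distrib]
    apply Finset.sum_congr rfl
    intro T _
    rw [pxid ((T ∩ D).card) μ]
    push_cast [Nat.choose_one_right]
    ring
  rw [hsum]
  have h1s : 1 ≤ s := by omega
  have hrel1 : ((s:ℝ)) * ((s-1).choose (m-1) : ℕ) = (m:ℝ) * (s.choose m : ℕ) := by
    exact_mod_cast congrArg (Nat.cast : ℕ → ℝ) (chooseRel s m (by omega) (by omega))
  have hrel2 : ((s:ℝ)-1) * ((s-2).choose (m-2) : ℕ) = ((m:ℝ)-1) * ((s-1).choose (m-1) : ℕ) := by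
    have h := chooseRel (s-1) (m-1) (by omega) (by omega)
    have h' : (s-1) * ((s-2).choose (m-2)) = (m-1) * ((s-1).choose (m-1)) := by
      have e1 : s-1-1 = s-2 := by omega
      have e2 : m-1-1 = m-2 := by omega
      rwa [e1, e2] at h
    have := congrArg (Nat.cast : ℕ → ℝ) h'
    push_cast [Nat.cast_sub (by omega : 1 ≤ s), Nat.cast_sub (by omega : 1 ≤ m)] at this
    linarith
  have hrel3 : ((s:ℝ)-2) * ((s-3).choose (m-3) : ℕ) = ((m:ℝ)-2) * ((s-2).choose (m-2) : ℕ) := by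
    have h := chooseRel (s-2) (m-2) (by omega) (by omega)
    have h' : (s-2) * ((s-3).choose (m-3)) = (m-2) * ((s-2).choose (m-2)) := by
      have e1 : s-2-1 = s-3 := by omega
      have e2 : m-2-1 = m-3 := by omega
      rwa [e1, e2] at h
    have := congrArg (Nat.cast : ℕ → ℝ) h'
    push_cast [Nat.cast_sub (by omega : 2 ≤ s), Nat.cast_sub (by omega : 2 ≤ m)] at this
    linarith
  have hrel4 : ((s:ℝ)-3) * ((s-4).choose (m-4) : ℕ) = ((m:ℝ)-3) * ((s-3).choose (m-3) : ℕ) := by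
    have h := chooseRel (s-3) (m-3) (by omega) (by omega)
    have h' : (s-3) * ((s-4).choose (m-4)) = (m-3) * ((s-3).choose (m-3)) := by
      have e1 : s-3-1 = s-4 := by omega
      have e2 : m-3-1 = m-4 := by omega
      rwa [e1, e2] at h
    have := congrArg (Nat.cast : ℕ → ℝ) h'
    push_cast [Nat.cast_sub (by omega : 3 ≤ s), Nat.cast_sub (by omega : 3 ≤ m)] at this
    linarith
  have hds : d ≤ s := Finset.card_le_card hDS
  have hBpos : (0:ℝ) < (s.choose m : ℕ) := by
    exact_mod_cast Nat.choose_pos hm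
  have hmu : (s:ℝ) * μ = (d:ℝ) * m := by
    rw [hmudef]
    field_simp
  have key := ratIneq (s:ℝ) (d:ℝ) (m:ℝ) ((s.choose m : ℕ):ℝ)
    (((s-1).choose (m-1) : ℕ):ℝ) (((s-2).choose (m-2) : ℕ):ℝ)
    (((s-3).choose (m-3) : ℕ):ℝ) (((s-4).choose (m-4) : ℕ):ℝ)
    ((d.choose 2 : ℕ):ℝ) ((d.choose 3 : ℕ):ℝ) ((d.choose 4 : ℕ):ℝ) μ
    (by exact_mod_cast hs) (by positivity) (by exact_mod_cast hds) (by positivity)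
    (by exact_mod_cast hm) hBpos hrel1 hrel2 hrel3 hrel4
    (f2id (d)) (f3id d) (f4id d) hmu
  push_cast [Nat.choose_one_right]
  push_cast [Nat.choose_one_right] at key
  linarith


end CountAux

end Aux

/-- For every `ε > 0` there exists an integer `n₀` such that the following
holds. Let `G` be a digraph on `n ≥ n₀` vertices, let `S ⊆ V(G)`, let `m` be a positive
integer with `m ≤ |S|`, and set `K = m/|S|`. Then there exists `T ⊆ S` with `|T| = m` such
that for every vertex `v`, the four quantities `d⁺(v,T)`, `d⁻(v,T)`, `d⁺(v,S∖T)`,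
`d⁻(v,S∖T)` differ from `K·d⁺(v,S)`, `K·d⁻(v,S)`, `(1−K)·d⁺(v,S)`, `(1−K)·d⁻(v,S)`
respectively by at most `εn`. -/




theorem stmt14 (ε : ℝ) (hε : 0 < ε) :
    ∃ n₀ : ℕ, ∀ (n : ℕ) (V : Type) [Fintype V] (G : V → V → Prop),
      n₀ ≤ n → Fintype.card V = n → Irreflexive G →
      ∀ (S : Set V) (m : ℕ), 0 < m → m ≤ S.ncard →
      ∃ T : Set V, T ⊆ S ∧ T.ncard = m ∧
        ∀ v : V,
          |(outdegOn G v T : ℝ) - (m / S.ncard : ℝ) * (outdegOn G v S : ℝ)| ≤ ε * n ∧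
          |(indegOn G v T : ℝ) - (m / S.ncard : ℝ) * (indegOn G v S : ℝ)| ≤ ε * n ∧
          |(outdegOn G v (S \ T) : ℝ) - (1 - (m / S.ncard : ℝ)) * (outdegOn G v S : ℝ)| ≤ ε * n ∧
          |(indegOn G v (S \ T) : ℝ) - (1 - (m / S.ncard : ℝ)) * (indegOn G v S : ℝ)| ≤ ε * n := by
  classical
  set δ : ℝ := min ε 1 with hδdef
  have hδ0 : 0 < δ := lt_min hε one_pos
  have hδ1 : δ ≤ 1 := min_le_right _ _
  have hδε : δ ≤ ε := min_le_left _ _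
  refine ⟨⌈2000/δ^4⌉₊, ?_⟩
  intro n V _ G hn hcard _hirr S m hm0 hms
  have hnR : 2000/δ^4 ≤ (n:ℝ) := by
    rw [← Nat.ceil_le]; exact hn
  have hδ4n : 2000 ≤ δ^4 * n := by
    rw [div_le_iff₀ (by positivity)] at hnR; linarith
  have hn0 : (0:ℝ) < n := by nlinarith [pow_pos hδ0 4]
  have hδn : 1000 ≤ δ * n := by
    have h3 : δ^3 ≤ 1 := pow_le_one₀ hδ0.le hδ1
    have h4 : δ^4*(n:ℝ) = δ^3*(δ*(n:ℝ)) := by ring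
    nlinarith [mul_pos hδ0 hn0]
  -- finset versions
  have hSfin : S.Finite := S.toFinite
  set S' : Finset V := hSfin.toFinset with hS'def
  have hcardS : S.ncard = S'.card := Set.ncard_eq_toFinset_card S hSfin
  have hmsc : m ≤ S'.card := by rw [← hcardS]; exact hms
  have hs'n : S'.card ≤ n := by rw [← hcard]; exact Finset.card_le_univ S'
  have hs'0 : 0 < S'.card := lt_of_lt_of_le hm0 hmsc
  set Dout : V → Finset V := fun v => S'.filter (fun u => G v u) with hDoutdef
  set Din : V → Finset V := fun v => S'.filter (fun u => G u v) with hDindef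
  have hDoutS : ∀ v, Dout v ⊆ S' := fun v => Finset.filter_subset _ _
  have hDinS : ∀ v, Din v ⊆ S' := fun v => Finset.filter_subset _ _
  set K : ℝ := (m:ℝ)/(S'.card) with hKdef
  -- key claim
  have key : ∃ T' ∈ S'.powersetCard m, ∀ v : V,
      |((T' ∩ Dout v).card : ℝ) - K * ((Dout v).card)| ≤ δ * n ∧
      |((T' ∩ Din v).card : ℝ) - K * ((Din v).card)| ≤ δ * n := by
    by_cases hmbig : m ≤ 1000
    · obtain ⟨T', hT'⟩ := Finset.powersetCard_nonempty.2 hmsc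
      refine ⟨T', hT', fun v => ?_⟩
      have hT'm : T'.card = m := (Finset.mem_powersetCard.1 hT').2
      have hbound : ∀ D : Finset V, D ⊆ S' →
          |((T' ∩ D).card : ℝ) - K * (D.card)| ≤ δ * n := by
        intro D hDS
        have hxm : ((T' ∩ D).card : ℝ) ≤ m := by
          exact_mod_cast (hT'm ▸ Finset.card_le_card (Finset.inter_subset_left) : (T' ∩ D).card ≤ m)
        have hds : ((D.card):ℝ) ≤ S'.card := by
          exact_mod_cast Finset.card_le_card hDS
        have h := devTrivial (m:ℝ) (S'.card:ℝ) (D.card:ℝ) ((T' ∩ D).card:ℝ)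
          (by exact_mod_cast hs'0) (by positivity) hxm (by positivity) hds (by positivity)
        calc |((T' ∩ D).card : ℝ) - K * (D.card)|
            = |((T' ∩ D).card : ℝ) - (m:ℝ)/(S'.card)*(D.card)| := by rw [hKdef]
          _ ≤ (m:ℝ) := h
          _ ≤ 1000 := by exact_mod_cast hmbig
          _ ≤ δ * n := hδn
      exact ⟨hbound (Dout v) (hDoutS v), hbound (Din v) (hDinS v)⟩
    · push_neg at hmbig
      have hm4 : 4 ≤ m := by omega
      have hs1000 : 1000 ≤ S'.card := by omega
      have hsumF : ∑ T ∈ S'.powersetCard m,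
          (∑ v : V, ((((T ∩ Dout v).card : ℝ) - K * ((Dout v).card))^4
            + (((T ∩ Din v).card : ℝ) - K * ((Din v).card))^4))
          ≤ ∑ _T ∈ S'.powersetCard m, (2*(n:ℝ)*(S'.card:ℝ)^2) := by
        have hv : ∀ v : V, (∑ T ∈ S'.powersetCard m,
            ((((T ∩ Dout v).card : ℝ) - K * ((Dout v).card))^4
              + (((T ∩ Din v).card : ℝ) - K * ((Din v).card))^4))
            ≤ 2*(S'.card:ℝ)^2*(S'.card.choose m) := by
          intro v
          rw [Finset.sum_add_distrib]
          have h1 := momentBound S' (Dout v) m (hDoutS v) hmsc hm4 hs1000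
          have h2 := momentBound S' (Din v) m (hDinS v) hmsc hm4 hs1000
          rw [hKdef]
          linarith
        calc ∑ T ∈ S'.powersetCard m,
            (∑ v : V, ((((T ∩ Dout v).card : ℝ) - K * ((Dout v).card))^4
              + (((T ∩ Din v).card : ℝ) - K * ((Din v).card))^4))
            = ∑ v : V, (∑ T ∈ S'.powersetCard m,
              ((((T ∩ Dout v).card : ℝ) - K * ((Dout v).card))^4
                + (((T ∩ Din v).card : ℝ) - K * ((Din v).card))^4)) := Finset.sum_comm
          _ ≤ ∑ _v : V, 2*(S'.card:ℝ)^2*(S'.card.choose m) :=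
              Finset.sum_le_sum (fun v _ => hv v)
          _ = (n:ℝ) * (2*(S'.card:ℝ)^2*(S'.card.choose m)) := by
              rw [Finset.sum_const, nsmul_eq_mul, Finset.card_univ, hcard]
          _ = (S'.card.choose m : ℝ) * (2*(n:ℝ)*(S'.card:ℝ)^2) := by ring
          _ = ∑ _T ∈ S'.powersetCard m, (2*(n:ℝ)*(S'.card:ℝ)^2) := by
              rw [Finset.sum_const, Finset.card_powersetCard, nsmul_eq_mul]
      obtain ⟨T', hT'mem, hT'le⟩ := Finset.exists_le_of_sum_le
        (Finset.powersetCard_nonempty.2 hmsc) hsumF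
      refine ⟨T', hT'mem, fun v => ?_⟩
      have hterm : (((T' ∩ Dout v).card : ℝ) - K * ((Dout v).card))^4
          + (((T' ∩ Din v).card : ℝ) - K * ((Din v).card))^4 ≤ 2*(n:ℝ)*(S'.card:ℝ)^2 := by
        have h := Finset.single_le_sum (f := fun v : V =>
          ((((T' ∩ Dout v).card : ℝ) - K * ((Dout v).card))^4
            + (((T' ∩ Din v).card : ℝ) - K * ((Din v).card))^4))
          (fun i _ => by positivity) (Finset.mem_univ v)
        exact le_trans h hT'le
      have hbig : 2*(n:ℝ)*(S'.card:ℝ)^2 ≤ (δ*n)^4 := by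
        have h1 : ((S'.card:ℝ))^2 ≤ (n:ℝ)^2 := by
          apply pow_le_pow_left₀ (by positivity); exact_mod_cast hs'n
        have h2 : 2*(n:ℝ)*(S'.card:ℝ)^2 ≤ 2*(n:ℝ)^3 := by nlinarith
        have h3 : 2*(n:ℝ)^3 ≤ (δ*n)^4 := by
          have h4 : (δ*(n:ℝ))^4 = (δ^4*n)*(n:ℝ)^3 := by ring
          rw [h4]
          nlinarith [pow_pos hn0 3]
        linarith
      have habs : ∀ a : ℝ, a^4 ≤ (δ*n)^4 → |a| ≤ δ*n := by
        intro a ha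
        have h1 : |a|^4 ≤ (δ*n)^4 := by
          rw [← abs_pow]
          rwa [abs_of_nonneg (by positivity : (0:ℝ) ≤ a^4)]
        exact le_of_pow_le_pow_left₀ (by norm_num) (mul_pos hδ0 hn0).le h1
      have hnn1 : (0:ℝ) ≤ (((T' ∩ Dout v).card : ℝ) - K * ((Dout v).card))^4 := by positivity
      have hnn2 : (0:ℝ) ≤ (((T' ∩ Din v).card : ℝ) - K * ((Din v).card))^4 := by positivity
      exact ⟨habs _ (by linarith), habs _ (by linarith)⟩
  -- postprocessing
  obtain ⟨T', hT'mem, hT'⟩ := key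
  obtain ⟨hT'S, hT'card⟩ := Finset.mem_powersetCard.1 hT'mem
  have hδnεn : δ * n ≤ ε * n := mul_le_mul_of_nonneg_right hδε hn0.le
  refine ⟨(↑T' : Set V), ?_, ?_, ?_⟩
  · intro u hu
    exact hSfin.mem_toFinset.1 (hT'S hu)
  · rw [Set.ncard_coe_finset]; exact hT'card
  · intro v
    have eqOut : outdegOn G v (↑T' : Set V) = (T' ∩ Dout v).card := by
      show {u ∈ (↑T' : Set V) | G v u}.ncard = _
      rw [show {u ∈ (↑T' : Set V) | G v u} = ↑(T' ∩ Dout v) by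
        ext u
        simp only [Set.mem_setOf_eq, Finset.coe_inter, Set.mem_inter_iff, Finset.mem_coe,
          hDoutdef, Finset.mem_filter, Finset.mem_coe]
        have hus : u ∈ T' → u ∈ S' := fun h => hT'S h
        tauto]
      exact Set.ncard_coe_finset _
    have eqIn : indegOn G v (↑T' : Set V) = (T' ∩ Din v).card := by
      show {u ∈ (↑T' : Set V) | G u v}.ncard = _
      rw [show {u ∈ (↑T' : Set V) | G u v} = ↑(T' ∩ Din v) by
        ext u
        simp only [Set.mem_setOf_eq, Finset.coe_inter, Set.mem_inter_iff, Finset.mem_coe,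
          hDindef, Finset.mem_filter, Finset.mem_coe]
        have hus : u ∈ T' → u ∈ S' := fun h => hT'S h
        tauto]
      exact Set.ncard_coe_finset _
    have eqOutS : outdegOn G v S = (Dout v).card := by
      show {u ∈ S | G v u}.ncard = _
      rw [show {u ∈ S | G v u} = ↑(Dout v) by
        ext u
        simp only [Set.mem_setOf_eq, hDoutdef, Finset.mem_coe, Finset.mem_filter,
          hS'def, hSfin.mem_toFinset]]
      exact Set.ncard_coe_finset _
    have eqInS : indegOn G v S = (Din v).card := by
      show {u ∈ S | G u v}.ncard = _
      rw [show {u ∈ S | G u v} = ↑(Din v) by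
        ext u
        simp only [Set.mem_setOf_eq, hDindef, Finset.mem_coe, Finset.mem_filter,
          hS'def, hSfin.mem_toFinset]]
      exact Set.ncard_coe_finset _
    have eqOutD : outdegOn G v (S \ (↑T' : Set V)) = (Dout v).card - (T' ∩ Dout v).card := by
      show {u ∈ S \ (↑T' : Set V) | G v u}.ncard = _
      rw [show {u ∈ S \ (↑T' : Set V) | G v u} = ↑(Dout v \ T') by
        ext u
        simp only [Set.mem_setOf_eq, Set.mem_diff, Finset.coe_sdiff, Finset.mem_coe,
          Finset.mem_sdiff, hDoutdef, Finset.mem_filter, hS'def, hSfin.mem_toFinset]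
        tauto]
      rw [Set.ncard_coe_finset]
      have := Finset.card_sdiff_add_card_inter (Dout v) T'
      rw [Finset.inter_comm T' (Dout v)]
      omega
    have eqInD : indegOn G v (S \ (↑T' : Set V)) = (Din v).card - (T' ∩ Din v).card := by
      show {u ∈ S \ (↑T' : Set V) | G u v}.ncard = _
      rw [show {u ∈ S \ (↑T' : Set V) | G u v} = ↑(Din v \ T') by
        ext u
        simp only [Set.mem_setOf_eq, Set.mem_diff, Finset.coe_sdiff, Finset.mem_coe,
          Finset.mem_sdiff, hDindef, Finset.mem_filter, hS'def, hSfin.mem_toFinset]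
        tauto]
      rw [Set.ncard_coe_finset]
      have := Finset.card_sdiff_add_card_inter (Din v) T'
      rw [Finset.inter_comm T' (Din v)]
      omega
    have hKeq : ((m:ℝ) / (S.ncard : ℝ)) = K := by rw [hKdef, hcardS]
    obtain ⟨h1, h2⟩ := hT' v
    have hle1 : (T' ∩ Dout v).card ≤ (Dout v).card :=
      Finset.card_le_card Finset.inter_subset_right
    have hle2 : (T' ∩ Din v).card ≤ (Din v).card :=
      Finset.card_le_card Finset.inter_subset_right
    refine ⟨?_, ?_, ?_, ?_⟩
    · rw [eqOut, eqOutS, hKeq]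
      exact le_trans h1 hδnεn
    · rw [eqIn, eqInS, hKeq]
      exact le_trans h2 hδnεn
    · rw [eqOutD, eqOutS, hKeq, Nat.cast_sub hle1]
      rw [show ((Dout v).card : ℝ) - ((T' ∩ Dout v).card : ℝ) - (1 - K) * ((Dout v).card : ℝ)
        = -(((T' ∩ Dout v).card : ℝ) - K * ((Dout v).card : ℝ)) by ring, abs_neg]
      exact le_trans h1 hδnεn
    · rw [eqInD, eqInS, hKeq, Nat.cast_sub hle2]
      rw [show ((Din v).card : ℝ) - ((T' ∩ Din v).card : ℝ) - (1 - K) * ((Din v).card : ℝ)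
        = -(((T' ∩ Din v).card : ℝ) - K * ((Din v).card : ℝ)) by ring, abs_neg]
      exact le_trans h2 hδnεn
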